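/- For a = 1 and p = 2, Dwork's hypergeometric function with s = 1 satisfies F_1(t)/F_{1}(t^2) = 1 + t, and (−1)·t^l·(value at t^{-1}) = −(1+t) ≠ 1+t, where l = 1; hence the transformation formula 𝓕^Dw_a(t) = ((−1)^s t)^l 𝓕^Dw_a(t^{-1}) fails for p = 2, s = 1, a = 1. -/

import Mathlib

/-- For `p = 2`, `s = 1`, `a = 1`: Dwork's hypergeometric function is
`𝓕^Dw_1(t) = F_1(t)/F_1(t^2) = 1 + t` (i.e. `F_1(t) = (1+t)·F_1(t^2)` with
`F_1(t) = ∑_k t^k` and `F_1(t^2) = ∑_k t^{2k}`), while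
`((-1)·t)^l 𝓕^Dw_1(t⁻¹) = -t(1 + t⁻¹) = -(1+t) ≠ 1 + t` (here `l = 1`), so the
transformation formula `𝓕^Dw_a(t) = ((-1)^s t)^l 𝓕^Dw_a(t⁻¹)` fails for
`p = 2`, `s = 1`, `a = 1`. -/
theorem dwork_transformation_fails_p2 :
    (PowerSeries.mk fun _ : ℕ => (1 : ℤ_[2]))
        = (1 + PowerSeries.X)
          * (PowerSeries.mk fun k : ℕ => if 2 ∣ k then (1 : ℤ_[2]) else 0)
      ∧ -(1 + (PowerSeries.X : PowerSeries ℤ_[2])) ≠ 1 + PowerSeries.X := by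
  constructor
  · ext n
    rw [add_mul, one_mul]
    simp only [map_add, PowerSeries.coeff_mk]
    rcases n with _ | m
    · simp
    · rw [PowerSeries.coeff_succ_X_mul]
      simp only [PowerSeries.coeff_mk]
      by_cases h : 2 ∣ m
      · rw [if_neg (by omega), if_pos h]; ring
      · rw [if_pos (by omega), if_neg h]; ring
  · intro h
    have h0 := congrArg (PowerSeries.coeff (R := ℤ_[2]) 0) h
    simp only [map_neg, map_add, PowerSeries.coeff_zero_one,
      PowerSeries.coeff_zero_X, add_zero] at h0
    have : (2 : ℤ_[2]) = 0 := by linear_combination -h0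
    exact two_ne_zero this
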